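/- For every natural number d ≥ 1, there exists a constant C ≥ 0, independent of ω, such that for all real ω ≥ 1, sup_{t∈[0,t*]} ‖G_d(t)‖ ≤ C·ω^{−d}. -/

import Mathlib

noncomputable section

variable {A : Type*} [NormedRing A] [NormedAlgebra ℂ A] [CompleteSpace A]

/-- Iterated commutator: `adL L 0 x = x`, `adL L (k+1) x = L·(adL L k x) − (adL L k x)·L`. -/
def adL (L : A) : ℕ → A → A
  | 0, x => x
  | k+1, x => L * adL L k x - adL L k x * L

/-- `Nop L α k l r` is the operator `N(l,r)` relative to the multi-index `k` (1-based
entries `k 1, k 2, …`): `N(l,r) = ad_L^{k_l}(α)` if `l = r`,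
`N(l,r) = ad_L^{k_r}(α·N(l,r−1))` if `l < r`, and `N(l,r) = 1` if `l > r`. -/
def Nop (L α : A) (k : ℕ → ℕ) (l : ℕ) : ℕ → A
  | 0 => if l = 0 then adL L (k 0) α else 1
  | r+1 =>
    if r + 1 < l then 1
    else if l = r + 1 then adL L (k (r + 1)) α
    else adL L (k (r + 1)) (α * Nop L α k l r)

/-- The coefficients `a_j^ℓ = ∏_{r=0}^{j−1} (j−r)^{−(k_{ℓ−r}+1)}` (with `a_0^ℓ = 1`),
viewed as complex scalars. -/
def coefA (k : ℕ → ℕ) (j ℓ : ℕ) : ℂ :=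
  ∏ r ∈ Finset.range j, (((j - r : ℕ) : ℂ) ^ (k (ℓ - r) + 1))⁻¹

/-- The coefficients `b_j^ℓ = j^{−k_ℓ}·∏_{r=1}^{j−1} (j−r)^{−(k_{ℓ−r}+1)}` for `j ≥ 1`
(with `b_0^ℓ = 1`), viewed as complex scalars. -/
def coefB (k : ℕ → ℕ) (j ℓ : ℕ) : ℂ :=
  if j = 0 then 1
  else ((j : ℂ) ^ (k ℓ))⁻¹ * ∏ r ∈ Finset.Ico 1 j, (((j - r : ℕ) : ℂ) ^ (k (ℓ - r) + 1))⁻¹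

/-- `Fc L α k ℓ` is `F_ℓ`: `F₀ = 1`, `F_ℓ = −Σ_{m=0}^{ℓ−1} a_{ℓ−m}^ℓ·N(m+1,ℓ)·F_m`. -/
def Fc (L α : A) (k : ℕ → ℕ) : ℕ → A
  | 0 => 1
  | ℓ+1 => -∑ m ∈ (Finset.range (ℓ + 1)).attach,
      coefA k (ℓ + 1 - m.1) (ℓ + 1) • (Nop L α k (m.1 + 1) (ℓ + 1) * Fc L α k m.1)
  decreasing_by exact Finset.mem_range.mp m.2

/-- Extension of a `d`-tuple `κ = (k₁,…,k_d)` to a 1-based sequence `ℕ → ℕ`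
(with `kfun d κ i = k_i` for `1 ≤ i ≤ d`). -/
def kfun (d : ℕ) (κ : Fin d → ℕ) : ℕ → ℕ :=
  fun i => if h : 1 ≤ i ∧ i ≤ d then κ ⟨i - 1, by omega⟩ else 0

/-- The `d`-times nested oscillatory integral `G_d(t) = T^d e^{tL} u₀`:
`G₀(t) = exp(tL)·u₀`, `G_d(t) = ∫₀ᵗ exp((t−τ)L)·α·e^{iωτ}·G_{d−1}(τ) dτ`. -/
def Gfun (L α u₀ : A) (ω : ℝ) : ℕ → ℝ → A
  | 0, t => NormedSpace.exp ((t : ℂ) • L) * u₀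
  | d+1, t => ∫ τ in (0:ℝ)..t,
      Complex.exp (Complex.I * ω * τ) •
        (NormedSpace.exp (((t - τ : ℝ) : ℂ) • L) * α * Gfun L α u₀ ω d τ)

/-- The finite series
`S_n^d(t) = Σ_{k∈ℕ^d, 0 ≤ |k^d| ≤ n−d} (iω)^{−(d+|k^d|)} ·
  Σ_{ℓ=0}^{d} a_{d−ℓ}^d · e^{(d−ℓ)iωt} · N(ℓ+1,d) · exp(tL) · F_ℓ · u₀`. -/
def Sser (L α u₀ : A) (ω : ℝ) (n d : ℕ) (t : ℝ) : A :=
  ∑ m ∈ Finset.range (n - d + 1), ∑ κ ∈ Finset.Nat.antidiagonalTuple d m,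
    ((Complex.I * ω) ^ (d + m))⁻¹ •
      ∑ ℓ ∈ Finset.range (d + 1),
        (coefA (kfun d κ) (d - ℓ) d *
            Complex.exp (((d - ℓ : ℕ) : ℂ) * (Complex.I * ω * t))) •
          (Nop L α (kfun d κ) (ℓ + 1) d *
            (NormedSpace.exp ((t : ℂ) • L) * (Fc L α (kfun d κ) ℓ * u₀)))

/-- The remainder: `E_n^0(t) = 0` and
`E_n^d(t) = (iω)^{−n} · Σ_{k∈ℕ^d, |k^d| = n−d+1} Σ_{ℓ=0}^{d−1} b_{d−ℓ}^d ·
  (∫₀ᵗ exp((t−τ)L)·N(ℓ+1,d)·exp(τL)·e^{(d−ℓ)iωτ} dτ) · F_ℓ · u₀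
  + ∫₀ᵗ exp((t−τ)L)·α·e^{iωτ}·E_n^{d−1}(τ) dτ`. -/
def Eser (L α u₀ : A) (ω : ℝ) (n : ℕ) : ℕ → ℝ → A
  | 0, _ => 0
  | d+1, t =>
    ((Complex.I * ω) ^ n)⁻¹ •
      (∑ κ ∈ Finset.Nat.antidiagonalTuple (d + 1) (n - (d + 1) + 1),
        ∑ ℓ ∈ Finset.range (d + 1),
          coefB (kfun (d + 1) κ) (d + 1 - ℓ) (d + 1) •
            ((∫ τ in (0:ℝ)..t,
                Complex.exp (((d + 1 - ℓ : ℕ) : ℂ) * (Complex.I * ω * τ)) •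
                  (NormedSpace.exp (((t - τ : ℝ) : ℂ) • L) *
                    Nop L α (kfun (d + 1) κ) (ℓ + 1) (d + 1) *
                    NormedSpace.exp ((τ : ℂ) • L))) *
              (Fc L α (kfun (d + 1) κ) ℓ * u₀)))
    + ∫ τ in (0:ℝ)..t,
        Complex.exp (Complex.I * ω * τ) •
          (NormedSpace.exp (((t - τ : ℝ) : ℂ) • L) * α * Eser L α u₀ ω n d τ)

set_option linter.unusedSectionVars false
section Aux
open intervalIntegral

variable {A : Type*} [NormedRing A] [NormedAlgebra ℂ A] [CompleteSpace A]

/-- auxiliary exponential -/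
def Ee (L : A) (t : ℝ) : A := NormedSpace.exp ((t:ℂ) • L)

lemma Ee_cont (L : A) : Continuous (Ee L) := by
  let _ : NormedAlgebra ℚ A := .restrictScalars ℚ ℂ A
  exact NormedSpace.exp_continuous.comp (Complex.continuous_ofReal.smul continuous_const)

lemma Ee_add (L : A) (s t : ℝ) : Ee L (s + t) = Ee L s * Ee L t := by
  let _ : NormedAlgebra ℚ A := .restrictScalars ℚ ℂ A
  rw [Ee, Ee, Ee, ← NormedSpace.exp_add_of_commute (((Commute.refl L).smul_left _).smul_right _)]
  norm_num [add_smul]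

lemma Ee_zero (L : A) : Ee L 0 = 1 := by
  simp [Ee, NormedSpace.exp_zero]

lemma Ee_mul_neg (L : A) (t : ℝ) : Ee L t * Ee L (-t) = 1 := by
  rw [← Ee_add]; simp [Ee_zero]

lemma Ee_comm (L : A) (t : ℝ) : L * Ee L t = Ee L t * L :=
  (((Commute.refl L).smul_right ((t:ℂ))).exp_right).eq

lemma Ee_hasDerivAt (L : A) (t : ℝ) : HasDerivAt (Ee L) (Ee L t * L) t := by
  have h1 := hasDerivAt_exp_smul_const (𝕂 := ℂ) L ((t:ℝ):ℂ)
  have h2 : HasDerivAt (fun s : ℝ => (s : ℂ)) 1 t := Complex.ofRealCLM.hasDerivAt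
  unfold Ee; simpa [Function.comp_def] using HasDerivAt.scomp t h1 h2

lemma Ee_neg_hasDerivAt (L : A) (t : ℝ) :
    HasDerivAt (fun s : ℝ => Ee L (-s)) (-(Ee L (-t) * L)) t := by
  have h1 := Ee_hasDerivAt L (-t)
  have h2 : HasDerivAt (fun s : ℝ => -s) (-1) t := (hasDerivAt_id t).neg
  simpa [Function.comp_def] using h1.scomp t h2

lemma exists_Ee_bound (L : A) (T : ℝ) :
    ∃ M : ℝ, 1 ≤ M ∧ ∀ s ∈ Set.Icc (-T) T, ‖Ee L s‖ ≤ M := by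
  obtain ⟨M, hM⟩ := (isCompact_Icc (a := -T) (b := T)).exists_bound_of_continuousOn
    (Ee_cont L).continuousOn
  exact ⟨max M 1, le_max_right _ _, fun s hs => (hM s hs).trans (le_max_left _ _)⟩

/-- scalar oscillation -/
def psiF (ω : ℝ) (m : ℕ) (τ : ℝ) : ℂ := Complex.exp ((m:ℂ) * (Complex.I * ω * τ))

lemma psiF_cont (ω : ℝ) (m : ℕ) : Continuous (psiF ω m) := by
  unfold psiF; fun_prop

lemma psiF_norm (ω : ℝ) (m : ℕ) (τ : ℝ) : ‖psiF ω m τ‖ = 1 := by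
  have h : (m:ℂ) * (Complex.I * ω * τ) = ((m * ω * τ : ℝ) : ℂ) * Complex.I := by
    push_cast; ring
  rw [psiF, h, Complex.norm_exp_ofReal_mul_I]

lemma psiF_one (ω : ℝ) (τ : ℝ) : psiF ω 1 τ = Complex.exp (Complex.I * ω * τ) := by
  simp [psiF]

lemma psiF_zero_arg (ω : ℝ) (m : ℕ) : psiF ω m 0 = 1 := by simp [psiF]

lemma psiF_mul (ω : ℝ) (m : ℕ) (τ : ℝ) :
    psiF ω m τ * psiF ω 1 τ = psiF ω (m+1) τ := by
  rw [psiF, psiF, psiF, ← Complex.exp_add]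
  congr 1; push_cast; ring

lemma psiF_hasDerivAt (ω : ℝ) (m : ℕ) (τ : ℝ) :
    HasDerivAt (psiF ω m) (((m:ℂ) * (Complex.I * ω)) * psiF ω m τ) τ := by
  have h2 : HasDerivAt (fun s : ℝ => ((m:ℂ) * (Complex.I * ω)) * (s:ℂ))
      ((m:ℂ) * (Complex.I * ω)) τ := by
    simpa using (Complex.ofRealCLM.hasDerivAt (x := τ)).const_mul ((m:ℂ) * (Complex.I * ω))
  have h3 := h2.cexp
  have hfun : psiF ω m = fun s : ℝ => Complex.exp ((m:ℂ) * (Complex.I * ω) * (s:ℂ)) := by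
    funext s; rw [psiF]; ring_nf
  rw [hfun]
  convert h3 using 1
  simp [mul_comm]

/-- auxiliary primitive -/
def Jint (L α u₀ : A) (ω : ℝ) (d : ℕ) (t : ℝ) : A :=
  ∫ τ in (0:ℝ)..t, Complex.exp (Complex.I * ω * τ) • (Ee L (-τ) * α * Gfun L α u₀ ω d τ)

lemma Jint_integrand_cont (L α u₀ : A) (ω : ℝ) (d : ℕ)
    (hc : Continuous (Gfun L α u₀ ω d)) :
    Continuous fun τ : ℝ =>
      Complex.exp (Complex.I * ω * τ) • (Ee L (-τ) * α * Gfun L α u₀ ω d τ) := by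
  apply Continuous.smul
  · fun_prop
  · exact (((Ee_cont L).comp continuous_neg).mul continuous_const).mul hc

lemma Jint_cont (L α u₀ : A) (ω : ℝ) (d : ℕ) (hc : Continuous (Gfun L α u₀ ω d)) :
    Continuous (Jint L α u₀ ω d) :=
  intervalIntegral.continuous_primitive
    (fun a b => ((Jint_integrand_cont L α u₀ ω d hc)).intervalIntegrable a b) 0

lemma G_repr_of_cont (L α u₀ : A) (ω : ℝ) (d : ℕ)
    (hc : Continuous (Gfun L α u₀ ω d)) (t : ℝ) :
    Gfun L α u₀ ω (d+1) t = Ee L t * Jint L α u₀ ω d t := by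
  have key : ∀ τ : ℝ,
      Complex.exp (Complex.I * ω * τ) •
        (NormedSpace.exp (((t - τ : ℝ) : ℂ) • L) * α * Gfun L α u₀ ω d τ)
      = (ContinuousLinearMap.mul ℂ A (Ee L t))
          (Complex.exp (Complex.I * ω * τ) • (Ee L (-τ) * α * Gfun L α u₀ ω d τ)) := by
    intro τ
    have hE : NormedSpace.exp (((t - τ : ℝ) : ℂ) • L) = Ee L t * Ee L (-τ) := by
      rw [← Ee_add, Ee]; push_cast; ring_nf
    simp only [ContinuousLinearMap.mul_apply', hE, mul_smul_comm, mul_assoc]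
  show (∫ τ in (0:ℝ)..t, Complex.exp (Complex.I * ω * τ) •
        (NormedSpace.exp (((t - τ : ℝ) : ℂ) • L) * α * Gfun L α u₀ ω d τ)) = _
  rw [intervalIntegral.integral_congr (g := fun τ => (ContinuousLinearMap.mul ℂ A (Ee L t))
        (Complex.exp (Complex.I * ω * τ) • (Ee L (-τ) * α * Gfun L α u₀ ω d τ)))
      (fun τ _ => key τ),
    ContinuousLinearMap.intervalIntegral_comp_comm _
      ((Jint_integrand_cont L α u₀ ω d hc).intervalIntegrable 0 t)]
  rfl

lemma G_cont (L α u₀ : A) (ω : ℝ) : ∀ d : ℕ, Continuous (Gfun L α u₀ ω d) := by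
  intro d
  induction d with
  | zero =>
    show Continuous fun t : ℝ => Ee L t * u₀
    exact (Ee_cont L).mul continuous_const
  | succ d ih =>
    have : Gfun L α u₀ ω (d+1) = fun t => Ee L t * Jint L α u₀ ω d t :=
      funext (G_repr_of_cont L α u₀ ω d ih)
    rw [this]
    exact (Ee_cont L).mul (Jint_cont L α u₀ ω d ih)

lemma G_repr (L α u₀ : A) (ω : ℝ) (d : ℕ) (t : ℝ) :
    Gfun L α u₀ ω (d+1) t = Ee L t * Jint L α u₀ ω d t :=
  G_repr_of_cont L α u₀ ω d (G_cont L α u₀ ω d) t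

/-- lower-order term in the derivative of `Gfun` -/
def Glow (L α u₀ : A) (ω : ℝ) : ℕ → ℝ → A
  | 0, _ => 0
  | d+1, t => Complex.exp (Complex.I * ω * t) • (α * Gfun L α u₀ ω d t)

lemma Glow_cont (L α u₀ : A) (ω : ℝ) (d : ℕ) : Continuous (Glow L α u₀ ω d) := by
  cases d with
  | zero => exact continuous_const
  | succ d =>
    show Continuous fun t : ℝ => Complex.exp (Complex.I * ω * t) • (α * Gfun L α u₀ ω d t)
    exact Continuous.smul (by fun_prop) (continuous_const.mul (G_cont L α u₀ ω d))

lemma G_hasDerivAt (L α u₀ : A) (ω : ℝ) (d : ℕ) (t : ℝ) :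
    HasDerivAt (Gfun L α u₀ ω d)
      (L * Gfun L α u₀ ω d t + Glow L α u₀ ω d t) t := by
  cases d with
  | zero =>
    have h := (Ee_hasDerivAt L t).mul_const u₀
    have : Ee L t * L * u₀ = L * Gfun L α u₀ ω 0 t + Glow L α u₀ ω 0 t := by
      show Ee L t * L * u₀ = L * (Ee L t * u₀) + (0 : A)
      rw [add_zero, ← mul_assoc, Ee_comm]
    rw [← this]
    exact h
  | succ d =>
    have hrw : Gfun L α u₀ ω (d+1) = fun t => Ee L t * Jint L α u₀ ω d t :=
      funext (G_repr L α u₀ ω d)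
    rw [hrw]
    have hJ : HasDerivAt (Jint L α u₀ ω d)
        (Complex.exp (Complex.I * ω * t) • (Ee L (-t) * α * Gfun L α u₀ ω d t)) t := by
      apply intervalIntegral.integral_hasDerivAt_right
        ((Jint_integrand_cont L α u₀ ω d (G_cont L α u₀ ω d)).intervalIntegrable 0 t)
        ((Jint_integrand_cont L α u₀ ω d
          (G_cont L α u₀ ω d)).aestronglyMeasurable.stronglyMeasurableAtFilter)
        (Jint_integrand_cont L α u₀ ω d (G_cont L α u₀ ω d)).continuousAt
    have h := (Ee_hasDerivAt L t).mul hJ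
    have heq : Ee L t * L * Jint L α u₀ ω d t +
        Ee L t * (Complex.exp (Complex.I * ω * t) • (Ee L (-t) * α * Gfun L α u₀ ω d t))
        = L * (Ee L t * Jint L α u₀ ω d t) + Glow L α u₀ ω (d+1) t := by
      congr 1
      · rw [← mul_assoc, Ee_comm]
      · show _ = Complex.exp (Complex.I * ω * t) • (α * Gfun L α u₀ ω d t)
        rw [mul_smul_comm]
        congr 1
        rw [← mul_assoc, ← mul_assoc, Ee_mul_neg, one_mul]
    rw [← heq]
    exact h

lemma g_hasDerivAt (L α u₀ B : A) (ω : ℝ) (d : ℕ) (τ : ℝ) :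
    HasDerivAt (fun s => Ee L (-s) * B * Gfun L α u₀ ω d s)
      (Ee L (-τ) * (B * L - L * B) * Gfun L α u₀ ω d τ +
        Ee L (-τ) * B * Glow L α u₀ ω d τ) τ := by
  have h1 := (Ee_neg_hasDerivAt L τ).mul_const B
  have h := h1.mul (G_hasDerivAt L α u₀ ω d τ)
  have heq : -(Ee L (-τ) * L) * B * Gfun L α u₀ ω d τ +
      Ee L (-τ) * B * (L * Gfun L α u₀ ω d τ + Glow L α u₀ ω d τ)
      = Ee L (-τ) * (B * L - L * B) * Gfun L α u₀ ω d τ +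
        Ee L (-τ) * B * Glow L α u₀ ω d τ := by
    noncomm_ring
  rw [← heq]
  exact h

lemma g_cont (L α u₀ B : A) (ω : ℝ) (d : ℕ) :
    Continuous fun s : ℝ => Ee L (-s) * B * Gfun L α u₀ ω d s :=
  (((Ee_cont L).comp continuous_neg).mul continuous_const).mul (G_cont L α u₀ ω d)

lemma ibp (L α u₀ B : A) (T : ℝ) (hT : 0 < T) (d : ℕ)
    (CQ : ℝ) (hCQ : 0 ≤ CQ)
    (hQ : ∀ ω : ℝ, 1 ≤ ω → ∀ t ∈ Set.Icc (0:ℝ) T, ‖Gfun L α u₀ ω d t‖ ≤ CQ * ω⁻¹ ^ d)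
    (Cl : ℝ) (hCl : 0 ≤ Cl)
    (hLow : ∀ ω : ℝ, 1 ≤ ω → ∀ m : ℕ, 1 ≤ m → ∀ t ∈ Set.Icc (0:ℝ) T,
      ‖∫ τ in (0:ℝ)..t, psiF ω m τ • (Ee L (-τ) * B * Glow L α u₀ ω d τ)‖ ≤ Cl * ω⁻¹ ^ d) :
    ∃ C : ℝ, 0 ≤ C ∧ ∀ ω : ℝ, 1 ≤ ω → ∀ m : ℕ, 1 ≤ m → ∀ t ∈ Set.Icc (0:ℝ) T,
      ‖∫ τ in (0:ℝ)..t, psiF ω m τ • (Ee L (-τ) * B * Gfun L α u₀ ω d τ)‖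
        ≤ C * ω⁻¹ ^ (d+1) := by
  obtain ⟨M, hM1, hM⟩ := exists_Ee_bound L T
  have hM0 : (0:ℝ) ≤ M := le_trans zero_le_one hM1
  refine ⟨2 * (M * ‖B‖ * CQ) + (T * (M * ‖B * L - L * B‖ * CQ) + Cl), by positivity, ?_⟩
  intro ω hω m hm t ht
  have hω0 : (0:ℝ) < ω := lt_of_lt_of_le one_pos hω
  set g : ℝ → A := fun s => Ee L (-s) * B * Gfun L α u₀ ω d s with hg_def
  set g' : ℝ → A := fun s => Ee L (-s) * (B * L - L * B) * Gfun L α u₀ ω d s +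
      Ee L (-s) * B * Glow L α u₀ ω d s with hg'_def
  have hgd : ∀ τ : ℝ, HasDerivAt g (g' τ) τ := fun τ => g_hasDerivAt L α u₀ B ω d τ
  have hgc : Continuous g := g_cont L α u₀ B ω d
  have hg'c : Continuous g' := by
    apply Continuous.add
    · exact (((Ee_cont L).comp continuous_neg).mul continuous_const).mul (G_cont L α u₀ ω d)
    · exact (((Ee_cont L).comp continuous_neg).mul continuous_const).mul (Glow_cont L α u₀ ω d)
  set c : ℂ := (m:ℂ) * (Complex.I * ω) with hc_def
  have hc_norm : ‖c‖ = m * ω := by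
    rw [hc_def, norm_mul, norm_mul, Complex.norm_natCast, Complex.norm_I, one_mul,
      Complex.norm_real, Real.norm_eq_abs, abs_of_pos hω0]
  have hm0 : (1:ℝ) ≤ (m:ℝ) := by exact_mod_cast hm
  have hc_ne : c ≠ 0 := by
    intro h
    rw [h, norm_zero] at hc_norm
    nlinarith
  have hcinv : ‖c⁻¹‖ ≤ ω⁻¹ := by
    rw [norm_inv, hc_norm]
    rw [inv_le_inv₀ (by nlinarith) hω0]
    nlinarith
  set H : ℝ → A := fun τ => c⁻¹ • (psiF ω m τ • g τ) with hH_def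
  have hH : ∀ τ : ℝ, HasDerivAt H
      (psiF ω m τ • g τ + c⁻¹ • (psiF ω m τ • g' τ)) τ := by
    intro τ
    have h := ((psiF_hasDerivAt ω m τ).smul (hgd τ)).const_smul c⁻¹
    have e1 : c⁻¹ • (psiF ω m τ • g' τ + ((m:ℂ) * (Complex.I * ω) * psiF ω m τ) • g τ)
        = psiF ω m τ • g τ + c⁻¹ • (psiF ω m τ • g' τ) := by
      rw [smul_add, smul_smul (c⁻¹), ← hc_def, smul_smul, inv_mul_cancel_left₀ hc_ne, add_comm]
    rw [← e1]
    exact h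
  have hint1 : IntervalIntegrable (fun τ => psiF ω m τ • g τ) MeasureTheory.volume 0 t :=
    ((psiF_cont ω m).smul hgc).intervalIntegrable 0 t
  have hint2 : IntervalIntegrable (fun τ => c⁻¹ • (psiF ω m τ • g' τ))
      MeasureTheory.volume 0 t :=
    (((psiF_cont ω m).smul hg'c).const_smul c⁻¹).intervalIntegrable 0 t
  have hsub := intervalIntegral.integral_eq_sub_of_hasDerivAt
    (f := H) (f' := fun τ => psiF ω m τ • g τ + c⁻¹ • (psiF ω m τ • g' τ))
    (fun τ _ => hH τ) (hint1.add hint2)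
  rw [intervalIntegral.integral_add hint1 hint2] at hsub
  have hmain : (∫ τ in (0:ℝ)..t, psiF ω m τ • g τ)
      = (H t - H 0) - ∫ τ in (0:ℝ)..t, c⁻¹ • (psiF ω m τ • g' τ) := by
    rw [← hsub]; abel
  -- split g'
  set f1 : ℝ → A := fun τ => psiF ω m τ • (Ee L (-τ) * (B * L - L * B) * Gfun L α u₀ ω d τ)
    with hf1_def
  set f2 : ℝ → A := fun τ => psiF ω m τ • (Ee L (-τ) * B * Glow L α u₀ ω d τ) with hf2_def
  have hint_f1 : IntervalIntegrable f1 MeasureTheory.volume 0 t :=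
    ((psiF_cont ω m).smul ((((Ee_cont L).comp continuous_neg).mul continuous_const).mul
      (G_cont L α u₀ ω d))).intervalIntegrable 0 t
  have hint_f2 : IntervalIntegrable f2 MeasureTheory.volume 0 t :=
    ((psiF_cont ω m).smul ((((Ee_cont L).comp continuous_neg).mul continuous_const).mul
      (Glow_cont L α u₀ ω d))).intervalIntegrable 0 t
  have hsplit : (∫ τ in (0:ℝ)..t, psiF ω m τ • g' τ)
      = (∫ τ in (0:ℝ)..t, f1 τ) + ∫ τ in (0:ℝ)..t, f2 τ := by
    rw [← intervalIntegral.integral_add hint_f1 hint_f2]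
    apply intervalIntegral.integral_congr
    intro τ _
    simp only [hg'_def, hf1_def, hf2_def, smul_add]
  -- bounds
  have hEb : ∀ s ∈ Set.Icc (0:ℝ) T, ‖Ee L (-s)‖ ≤ M := by
    intro s hs
    exact hM (-s) ⟨by linarith [hs.2], by linarith [hs.1]⟩
  have hg_bound : ∀ s ∈ Set.Icc (0:ℝ) T, ‖g s‖ ≤ M * ‖B‖ * (CQ * ω⁻¹ ^ d) := by
    intro s hs
    calc ‖g s‖ ≤ ‖Ee L (-s) * B‖ * ‖Gfun L α u₀ ω d s‖ := norm_mul_le _ _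
    _ ≤ (‖Ee L (-s)‖ * ‖B‖) * (CQ * ω⁻¹ ^ d) := by
        apply mul_le_mul (norm_mul_le _ _) (hQ ω hω s hs) (norm_nonneg _)
        positivity
    _ ≤ M * ‖B‖ * (CQ * ω⁻¹ ^ d) := by
        have := hEb s hs
        have h1 : ‖Ee L (-s)‖ * ‖B‖ ≤ M * ‖B‖ :=
          mul_le_mul_of_nonneg_right this (norm_nonneg _)
        have h2 : (0:ℝ) ≤ CQ * ω⁻¹ ^ d := by positivity
        exact mul_le_mul_of_nonneg_right h1 h2
  have h0T : (0:ℝ) ∈ Set.Icc (0:ℝ) T := ⟨le_refl _, hT.le⟩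
  have hHnorm : ∀ s ∈ Set.Icc (0:ℝ) T, ‖H s‖ ≤ ω⁻¹ * (M * ‖B‖ * (CQ * ω⁻¹ ^ d)) := by
    intro s hs
    rw [hH_def]
    simp only [norm_smul, psiF_norm, one_mul]
    apply mul_le_mul hcinv (hg_bound s hs) (norm_nonneg _) (by positivity)
  have hf1_bound : ‖∫ τ in (0:ℝ)..t, f1 τ‖ ≤ T * (M * ‖B * L - L * B‖ * (CQ * ω⁻¹ ^ d)) := by
    have hb : ∀ x ∈ Set.uIoc (0:ℝ) t, ‖f1 x‖ ≤ M * ‖B * L - L * B‖ * (CQ * ω⁻¹ ^ d) := by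
      intro x hx
      rw [Set.uIoc_of_le ht.1] at hx
      have hxT : x ∈ Set.Icc (0:ℝ) T := ⟨hx.1.le, le_trans hx.2 ht.2⟩
      rw [hf1_def]
      simp only [norm_smul, psiF_norm, one_mul]
      calc ‖Ee L (-x) * (B * L - L * B) * Gfun L α u₀ ω d x‖
          ≤ ‖Ee L (-x) * (B * L - L * B)‖ * ‖Gfun L α u₀ ω d x‖ := norm_mul_le _ _
        _ ≤ (‖Ee L (-x)‖ * ‖B * L - L * B‖) * (CQ * ω⁻¹ ^ d) := by
            apply mul_le_mul (norm_mul_le _ _) (hQ ω hω x hxT) (norm_nonneg _)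
            positivity
        _ ≤ M * ‖B * L - L * B‖ * (CQ * ω⁻¹ ^ d) := by
            have h1 : ‖Ee L (-x)‖ * ‖B * L - L * B‖ ≤ M * ‖B * L - L * B‖ :=
              mul_le_mul_of_nonneg_right (hEb x hxT) (norm_nonneg _)
            exact mul_le_mul_of_nonneg_right h1 (by positivity)
    calc ‖∫ τ in (0:ℝ)..t, f1 τ‖ ≤ M * ‖B * L - L * B‖ * (CQ * ω⁻¹ ^ d) * |t - 0| :=
          intervalIntegral.norm_integral_le_of_norm_le_const hb
      _ ≤ T * (M * ‖B * L - L * B‖ * (CQ * ω⁻¹ ^ d)) := by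
          rw [sub_zero, abs_of_nonneg ht.1, mul_comm]
          apply mul_le_mul_of_nonneg_right ht.2 (by positivity)
  have hf2_bound : ‖∫ τ in (0:ℝ)..t, f2 τ‖ ≤ Cl * ω⁻¹ ^ d := hLow ω hω m hm t ht
  -- combine
  rw [hmain]
  have hI2 : (∫ τ in (0:ℝ)..t, c⁻¹ • (psiF ω m τ • g' τ))
      = c⁻¹ • ∫ τ in (0:ℝ)..t, psiF ω m τ • g' τ :=
    intervalIntegral.integral_smul c⁻¹ _
  have hg'int_norm : ‖∫ τ in (0:ℝ)..t, psiF ω m τ • g' τ‖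
      ≤ T * (M * ‖B * L - L * B‖ * (CQ * ω⁻¹ ^ d)) + Cl * ω⁻¹ ^ d := by
    rw [hsplit]
    exact (norm_add_le _ _).trans (add_le_add hf1_bound hf2_bound)
  calc ‖(H t - H 0) - ∫ τ in (0:ℝ)..t, c⁻¹ • (psiF ω m τ • g' τ)‖
      ≤ ‖H t - H 0‖ + ‖∫ τ in (0:ℝ)..t, c⁻¹ • (psiF ω m τ • g' τ)‖ := norm_sub_le _ _
    _ ≤ (‖H t‖ + ‖H 0‖) + ‖c⁻¹‖ * ‖∫ τ in (0:ℝ)..t, psiF ω m τ • g' τ‖ := by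
        rw [hI2, norm_smul]
        exact add_le_add (norm_sub_le _ _) le_rfl
    _ ≤ (ω⁻¹ * (M * ‖B‖ * (CQ * ω⁻¹ ^ d)) + ω⁻¹ * (M * ‖B‖ * (CQ * ω⁻¹ ^ d)))
        + ω⁻¹ * (T * (M * ‖B * L - L * B‖ * (CQ * ω⁻¹ ^ d)) + Cl * ω⁻¹ ^ d) := by
        refine add_le_add (add_le_add (hHnorm t ht) (hHnorm 0 h0T)) ?_
        exact mul_le_mul hcinv hg'int_norm (norm_nonneg _) (by positivity)
    _ = (2 * (M * ‖B‖ * CQ) + (T * (M * ‖B * L - L * B‖ * CQ) + Cl)) * ω⁻¹ ^ (d+1) := by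
        rw [pow_succ]; ring

lemma Qzero (L α u₀ : A) (T : ℝ) (hT : 0 < T) :
    ∃ C : ℝ, 0 ≤ C ∧ ∀ ω : ℝ, 1 ≤ ω → ∀ t ∈ Set.Icc (0:ℝ) T,
      ‖Gfun L α u₀ ω 0 t‖ ≤ C * ω⁻¹ ^ 0 := by
  obtain ⟨M, hM1, hM⟩ := exists_Ee_bound L T
  have hM0 : (0:ℝ) ≤ M := le_trans zero_le_one hM1
  refine ⟨M * ‖u₀‖, by positivity, ?_⟩
  intro ω hω t ht
  rw [pow_zero, mul_one]
  show ‖Ee L t * u₀‖ ≤ M * ‖u₀‖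
  calc ‖Ee L t * u₀‖ ≤ ‖Ee L t‖ * ‖u₀‖ := norm_mul_le _ _
    _ ≤ M * ‖u₀‖ :=
      mul_le_mul_of_nonneg_right (hM t ⟨by linarith [ht.1], ht.2⟩) (norm_nonneg _)

lemma QofP (L α u₀ : A) (T : ℝ) (hT : 0 < T) (d : ℕ) (C : ℝ) (hC : 0 ≤ C)
    (hP : ∀ ω : ℝ, 1 ≤ ω → ∀ m : ℕ, 1 ≤ m → ∀ t ∈ Set.Icc (0:ℝ) T,
      ‖∫ τ in (0:ℝ)..t, psiF ω m τ • (Ee L (-τ) * α * Gfun L α u₀ ω d τ)‖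
        ≤ C * ω⁻¹ ^ (d+1)) :
    ∃ C' : ℝ, 0 ≤ C' ∧ ∀ ω : ℝ, 1 ≤ ω → ∀ t ∈ Set.Icc (0:ℝ) T,
      ‖Gfun L α u₀ ω (d+1) t‖ ≤ C' * ω⁻¹ ^ (d+1) := by
  obtain ⟨M, hM1, hM⟩ := exists_Ee_bound L T
  have hM0 : (0:ℝ) ≤ M := le_trans zero_le_one hM1
  refine ⟨M * C, by positivity, ?_⟩
  intro ω hω t ht
  rw [G_repr]
  have hJ : Jint L α u₀ ω d t
      = ∫ τ in (0:ℝ)..t, psiF ω 1 τ • (Ee L (-τ) * α * Gfun L α u₀ ω d τ) := by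
    rw [Jint]
    apply intervalIntegral.integral_congr
    intro τ _
    simp only [psiF_one]
  calc ‖Ee L t * Jint L α u₀ ω d t‖ ≤ ‖Ee L t‖ * ‖Jint L α u₀ ω d t‖ := norm_mul_le _ _
    _ ≤ M * (C * ω⁻¹ ^ (d+1)) := by
        apply mul_le_mul (hM t ⟨by linarith [ht.1], ht.2⟩) ?_ (norm_nonneg _) hM0
        rw [hJ]
        exact hP ω hω 1 le_rfl t ht
    _ = M * C * ω⁻¹ ^ (d+1) := by ring

lemma low_succ (L α u₀ B : A) (T : ℝ) (d : ℕ) (C : ℝ)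
    (hP : ∀ ω : ℝ, 1 ≤ ω → ∀ m : ℕ, 1 ≤ m → ∀ t ∈ Set.Icc (0:ℝ) T,
      ‖∫ τ in (0:ℝ)..t, psiF ω m τ • (Ee L (-τ) * (B * α) * Gfun L α u₀ ω d τ)‖
        ≤ C * ω⁻¹ ^ (d+1)) :
    ∀ ω : ℝ, 1 ≤ ω → ∀ m : ℕ, 1 ≤ m → ∀ t ∈ Set.Icc (0:ℝ) T,
      ‖∫ τ in (0:ℝ)..t, psiF ω m τ • (Ee L (-τ) * B * Glow L α u₀ ω (d+1) τ)‖
        ≤ C * ω⁻¹ ^ (d+1) := by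
  intro ω hω m hm t ht
  have hcong : ∀ τ : ℝ, psiF ω m τ • (Ee L (-τ) * B * Glow L α u₀ ω (d+1) τ)
      = psiF ω (m+1) τ • (Ee L (-τ) * (B * α) * Gfun L α u₀ ω d τ) := by
    intro τ
    show psiF ω m τ • (Ee L (-τ) * B *
        (Complex.exp (Complex.I * ω * τ) • (α * Gfun L α u₀ ω d τ))) = _
    rw [← psiF_one ω τ, mul_smul_comm, smul_smul, psiF_mul]
    congr 1
    noncomm_ring
  rw [intervalIntegral.integral_congr (fun τ _ => hcong τ)]
  exact hP ω hω (m+1) (by omega) t ht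

lemma P_all (L α u₀ : A) (T : ℝ) (hT : 0 < T) :
    ∀ d : ℕ, ∀ B : A, ∃ C : ℝ, 0 ≤ C ∧ ∀ ω : ℝ, 1 ≤ ω → ∀ m : ℕ, 1 ≤ m →
      ∀ t ∈ Set.Icc (0:ℝ) T,
      ‖∫ τ in (0:ℝ)..t, psiF ω m τ • (Ee L (-τ) * B * Gfun L α u₀ ω d τ)‖
        ≤ C * ω⁻¹ ^ (d+1) := by
  intro d
  induction d with
  | zero =>
    intro B
    obtain ⟨CQ, hCQ, hQ⟩ := Qzero L α u₀ T hT
    apply ibp L α u₀ B T hT 0 CQ hCQ hQ 0 le_rfl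
    intro ω hω m hm t ht
    have hz : ∀ τ : ℝ, psiF ω m τ • (Ee L (-τ) * B * Glow L α u₀ ω 0 τ) = 0 := by
      intro τ
      show psiF ω m τ • (Ee L (-τ) * B * (0:A)) = 0
      simp
    rw [intervalIntegral.integral_congr (fun τ _ => hz τ)]
    simp
  | succ d ih =>
    intro B
    obtain ⟨CP, hCP, hP⟩ := ih α
    obtain ⟨CQ, hCQ, hQ⟩ := QofP L α u₀ T hT d CP hCP hP
    obtain ⟨CB, hCB, hPB⟩ := ih (B * α)
    exact ibp L α u₀ B T hT (d+1) CQ hCQ hQ CB hCB (low_succ L α u₀ B T d CB hPB)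

lemma Q_all (L α u₀ : A) (T : ℝ) (hT : 0 < T) (d : ℕ) :
    ∃ C : ℝ, 0 ≤ C ∧ ∀ ω : ℝ, 1 ≤ ω → ∀ t ∈ Set.Icc (0:ℝ) T,
      ‖Gfun L α u₀ ω d t‖ ≤ C * ω⁻¹ ^ d := by
  cases d with
  | zero => exact Qzero L α u₀ T hT
  | succ d =>
    obtain ⟨C, hC, hP⟩ := P_all L α u₀ T hT d α
    exact QofP L α u₀ T hT d C hC hP

end Aux

/-- For every `d ≥ 1`, there exists a constant `C ≥ 0`, independent of `ω`,
such that for all real `ω ≥ 1`, `sup_{t∈[0,t*]} ‖G_d(t)‖ ≤ C·ω^{−d}`. -/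
theorem stmt14 (L α u₀ : A) (T : ℝ) (hT : 0 < T) (d : ℕ) (hd : 1 ≤ d) :
    ∃ C : ℝ, 0 ≤ C ∧ ∀ ω : ℝ, 1 ≤ ω → ∀ t ∈ Set.Icc (0:ℝ) T,
      ‖Gfun L α u₀ ω d t‖ ≤ C * (ω ^ d)⁻¹ := by
  obtain ⟨C, hC, h⟩ := Q_all L α u₀ T hT d
  refine ⟨C, hC, ?_⟩
  intro ω hω t ht
  rw [← inv_pow]
  exact h ω hω t ht
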